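/- arXiv:2511.06504 — 2 statements merged into one kernel-verified Lean document; each statement's English description precedes it below -/
import Mathlib

section
/- Backup protection: Suppose under σ_{-u*} Ranking matches u to v and u has a backup b. Then for any permutation σ obtained by inserting u* into σ_{-u*} at an arbitrary rank, u is matched in R(σ) to some vertex w with σ(w) ≤ σ(b). -/
open List

variable {V : Type*}

/-- Whether vertex `u` is an endpoint of some edge in the partial matching `M`. -/
def isMatchedL [DecidableEq V] (M : List (V × V)) (u : V) : Bool :=
  M.any (fun p => p.1 = u || p.2 = u)

/-- One step of the Ranking algorithm: process vertex `u`.  If `u` is not forbidden and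
not yet matched, it is matched to the first available neighbor in the order `order`. -/
def rankingStepF [DecidableEq V] (G : SimpleGraph V) [DecidableRel G.Adj]
    (forbidden : List V) (order : List V) (M : List (V × V)) (u : V) : List (V × V) :=
  if u ∈ forbidden ∨ isMatchedL M u = true then M
  else
    match order.find? (fun w =>
        decide (G.Adj u w) && !(decide (w ∈ forbidden)) && !isMatchedL M w) with
    | some w => (u, w) :: M
    | none => M

/-- Partial matching of Ranking after processing the first `t` vertices of `order`. -/
def rankingPartialF [DecidableEq V] (G : SimpleGraph V) [DecidableRel G.Adj]
    (forbidden order : List V) (t : ℕ) : List (V × V) :=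
  (order.take t).foldl (rankingStepF G forbidden order) []

/-- The matching output by Ranking on the permutation given by the list `order`. -/
def rankingList [DecidableEq V] (G : SimpleGraph V) [DecidableRel G.Adj]
    (order : List V) : List (V × V) :=
  order.foldl (rankingStepF G [] order) []

/-- `u` is matched to `v` in the output of Ranking on `order`. -/
def matchedTo [DecidableEq V] (G : SimpleGraph V) [DecidableRel G.Adj]
    (order : List V) (u v : V) : Prop :=
  (u, v) ∈ rankingList G order ∨ (v, u) ∈ rankingList G order

/-- `u` is matched in the output of Ranking on `order`. -/
def isMatchedInRanking [DecidableEq V] (G : SimpleGraph V) [DecidableRel G.Adj]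
    (order : List V) (u : V) : Prop :=
  ∃ v, matchedTo G order u v

/-- The set of (unordered) edges of a list of matched pairs. -/
def matchEdges (L : List (V × V)) : Set (Sym2 V) := {e | ∃ p ∈ L, e = s(p.1, p.2)}

namespace BKaux

set_option linter.unusedSectionVars false

section DRunDef

variable {V : Type*} [DecidableEq V] (G : SimpleGraph V) [DecidableRel G.Adj]

/-- availability predicate for the chooser `a` -/
def pr (S : Finset V) (a : V) : V → Bool := fun w => decide (G.Adj a w) && decide (w ∉ S)

/-- Normal form of the Ranking run: forbidden set `S`, remaining list. -/
def DRun : Finset V → List V → List (V × V)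
  | _, [] => []
  | S, a :: L =>
    if a ∈ S then DRun S L
    else
      match L.find? (pr G S a) with
      | none => DRun S L
      | some c => (a, c) :: DRun (insert c S) L

/-- membership-symmetric pairing predicate -/
def MP (M : List (V × V)) (u w : V) : Prop := (u, w) ∈ M ∨ (w, u) ∈ M

variable {G}

theorem pr_iff {S : Finset V} {a w : V} : pr G S a w = true ↔ G.Adj a w ∧ w ∉ S := by
  simp [pr]

theorem MP_cons {p : V × V} {M : List (V × V)} {u w : V} (h : MP M u w) :
    MP (p :: M) u w := by
  rcases h with h | h
  · exact Or.inl (mem_cons_of_mem _ h)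
  · exact Or.inr (mem_cons_of_mem _ h)

theorem MP_cases {a c : V} {M : List (V × V)} {u w : V} (h : MP ((a, c) :: M) u w) :
    (a = u ∧ c = w) ∨ (a = w ∧ c = u) ∨ MP M u w := by
  rcases h with h | h <;> rcases mem_cons.1 h with h | h
  · exact Or.inl ⟨(Prod.ext_iff.1 h.symm).1, (Prod.ext_iff.1 h.symm).2⟩
  · exact Or.inr (Or.inr (Or.inl h))
  · exact Or.inr (Or.inl ⟨(Prod.ext_iff.1 h.symm).1, (Prod.ext_iff.1 h.symm).2⟩)
  · exact Or.inr (Or.inr (Or.inr h))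

theorem DRun_nil {S : Finset V} : DRun G S ([] : List V) = [] := rfl

theorem DRun_cons_mem {S : Finset V} {a : V} {L : List V} (h : a ∈ S) :
    DRun G S (a :: L) = DRun G S L := by
  rw [DRun, if_pos h]

theorem DRun_cons_none {S : Finset V} {a : V} {L : List V} (h : a ∉ S)
    (hf : L.find? (pr G S a) = none) :
    DRun G S (a :: L) = DRun G S L := by
  rw [DRun, if_neg h, hf]

theorem DRun_cons_some {S : Finset V} {a c : V} {L : List V} (h : a ∉ S)
    (hf : L.find? (pr G S a) = some c) :
    DRun G S (a :: L) = (a, c) :: DRun G (insert c S) L := by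
  rw [DRun, if_neg h, hf]

/-- components of pairs of a run: adjacency, availability, membership -/
theorem DRun_spec : ∀ {L : List V} {S : Finset V} {p : V × V}, p ∈ DRun G S L →
    G.Adj p.1 p.2 ∧ p.1 ∉ S ∧ p.2 ∉ S ∧ p.1 ∈ L ∧ p.2 ∈ L := by
  intro L
  induction L with
  | nil => intro S p h; simp [DRun_nil] at h
  | cons a L ih =>
    intro S p h
    by_cases ha : a ∈ S
    · rw [DRun_cons_mem ha] at h
      obtain ⟨h1, h2, h3, h4, h5⟩ := ih h
      exact ⟨h1, h2, h3, mem_cons_of_mem _ h4, mem_cons_of_mem _ h5⟩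
    · cases hf : L.find? (pr G S a) with
      | none =>
        rw [DRun_cons_none ha hf] at h
        obtain ⟨h1, h2, h3, h4, h5⟩ := ih h
        exact ⟨h1, h2, h3, mem_cons_of_mem _ h4, mem_cons_of_mem _ h5⟩
      | some c =>
        rw [DRun_cons_some ha hf] at h
        rcases mem_cons.1 h with rfl | h
        · obtain ⟨hadj, hc⟩ := pr_iff.1 (List.find?_some hf)
          exact ⟨hadj, ha, hc, mem_cons_self, mem_cons_of_mem _ (mem_of_find?_eq_some hf)⟩
        · obtain ⟨h1, h2, h3, h4, h5⟩ := ih h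
          exact ⟨h1, fun hx => h2 (Finset.mem_insert_of_mem hx),
            fun hx => h3 (Finset.mem_insert_of_mem hx),
            mem_cons_of_mem _ h4, mem_cons_of_mem _ h5⟩

theorem MP_spec {L : List V} {S : Finset V} {u w : V} (h : MP (DRun G S L) u w) :
    G.Adj u w ∧ u ∉ S ∧ w ∉ S ∧ u ∈ L ∧ w ∈ L := by
  rcases h with h | h
  · exact DRun_spec h
  · obtain ⟨h1, h2, h3, h4, h5⟩ := DRun_spec h
    exact ⟨h1.symm, h3, h2, h5, h4⟩

theorem MP_not_mem {L : List V} {S : Finset V} {u w : V} (hu : u ∉ L)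
    (h : MP (DRun G S L) u w) : False := hu (MP_spec h).2.2.2.1

theorem MP_forb {L : List V} {S : Finset V} {u w : V} (hu : u ∈ S)
    (h : MP (DRun G S L) u w) : False := (MP_spec h).2.1 hu

theorem find?_congr' {p q : V → Bool} {l : List V} (h : ∀ w ∈ l, p w = q w) :
    l.find? p = l.find? q := by
  induction l with
  | nil => rfl
  | cons a l ih =>
    rw [find?_cons, find?_cons, h a (mem_cons_self)]
    cases hqa : q a
    · exact ih (fun w hw => h w (mem_cons_of_mem a hw))
    · rfl

theorem find?_mid' {p : V → Bool} {y : V} (hy : p y = false) :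
    ∀ (l1 : List V) (l2 : List V), (l1 ++ y :: l2).find? p = (l1 ++ l2).find? p := by
  intro l1
  induction l1 with
  | nil => intro l2; rw [nil_append, nil_append, find?_cons, hy]
  | cons a l1 ih =>
    intro l2
    rw [cons_append, cons_append, find?_cons, find?_cons]
    cases p a
    · exact ih l2
    · rfl

/-- inserting an element not occurring in the list into the forbidden set is irrelevant -/
theorem DRun_irrel {y : V} : ∀ {L : List V}, y ∉ L → ∀ (S : Finset V),
    DRun G (insert y S) L = DRun G S L := by
  intro L
  induction L with
  | nil => intro _ S; rfl
  | cons a L ih =>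
    intro hy S
    have hya : a ≠ y := fun h => hy (h ▸ mem_cons_self)
    have hyL : y ∉ L := fun h => hy (mem_cons_of_mem _ h)
    have hfind : L.find? (pr G (insert y S) a) = L.find? (pr G S a) := by
      apply find?_congr'
      intro w hw
      have hwy : w ≠ y := fun h => hyL (h ▸ hw)
      simp [pr, Finset.mem_insert, hwy]
    by_cases ha : a ∈ S
    · rw [DRun_cons_mem (Finset.mem_insert_of_mem ha), DRun_cons_mem ha, ih hyL]
    · have ha' : a ∉ insert y S := by
        simp [Finset.mem_insert, hya, ha]
      cases hf : L.find? (pr G S a) with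
      | none =>
        rw [DRun_cons_none ha' (hfind.trans hf), DRun_cons_none ha hf, ih hyL]
      | some c =>
        rw [DRun_cons_some ha' (hfind.trans hf), DRun_cons_some ha hf,
          Finset.insert_comm, ih hyL]

/-- an element of the forbidden set can be removed from the list without effect -/
theorem DRun_mid {y : V} : ∀ (L1 : List V) {L2 : List V} {S : Finset V}, y ∈ S →
    DRun G S (L1 ++ y :: L2) = DRun G S (L1 ++ L2) := by
  intro L1
  induction L1 with
  | nil =>
    intro L2 S hy
    rw [nil_append, nil_append, DRun_cons_mem hy]
  | cons a L1 ih =>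
    intro L2 S hy
    rw [cons_append, cons_append]
    by_cases ha : a ∈ S
    · rw [DRun_cons_mem ha, DRun_cons_mem ha, ih hy]
    · have hpy : pr G S a y = false := by
        simp [pr, hy]
      have hfe : (L1 ++ y :: L2).find? (pr G S a) = (L1 ++ L2).find? (pr G S a) :=
        find?_mid' hpy L1 L2
      cases hf : (L1 ++ L2).find? (pr G S a) with
      | none => rw [DRun_cons_none ha (hfe.trans hf), DRun_cons_none ha hf, ih hy]
      | some c =>
        rw [DRun_cons_some ha (hfe.trans hf), DRun_cons_some ha hf,
          ih (Finset.mem_insert_of_mem hy)]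

end DRunDef


variable {α : Type*}

theorem find?_split {p : α → Bool} {l : List α} {c : α} (h : l.find? p = some c) :
    ∃ l1 l2, l = l1 ++ c :: l2 ∧ ∀ w ∈ l1, p w = false := by
  induction l with
  | nil => simp at h
  | cons a l ih =>
    rw [find?_cons] at h
    by_cases hpa : p a
    · simp only [hpa, if_pos] at h
      obtain rfl := Option.some.inj h
      exact ⟨[], l, by simp, by simp⟩
    · simp [hpa] at h
      obtain ⟨l1, l2, rfl, hl1⟩ := ih h
      refine ⟨a :: l1, l2, rfl, ?_⟩
      intro w hw
      rcases mem_cons.1 hw with rfl | hw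
      · simpa using hpa
      · exact hl1 w hw

theorem find?_mono_some {p q : α → Bool} {l : List α} {c : α}
    (hpq : ∀ w, p w = true → q w = true) (h : l.find? q = some c) (hc : p c = true) :
    l.find? p = some c := by
  induction l with
  | nil => simp at h
  | cons a l ih =>
    rw [find?_cons] at h ⊢
    by_cases hqa : q a
    · simp [hqa] at h
      subst h
      simp [hc]
    · have hpa : ¬ p a = true := fun hp => hqa (hpq a hp)
      simp [hqa] at h
      simp [Bool.not_eq_true] at hpa
      simp [hpa]
      exact ih h

theorem find?_mono_cases {p q : α → Bool} {l : List α} {c : α}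
    (hqp : ∀ w, q w = true → p w = true) (h : l.find? q = some c) :
    ∃ c', l.find? p = some c' ∧ (c' = c ∨ q c' = false) := by
  induction l with
  | nil => simp at h
  | cons a l ih =>
    rw [find?_cons] at h ⊢
    by_cases hpa : p a
    · refine ⟨a, by simp [hpa], ?_⟩
      by_cases hqa : q a
      · simp [hqa] at h; exact Or.inl h
      · exact Or.inr (by simpa using hqa)
    · have hqa : ¬ q a = true := fun hq => hpa (hqp a hq)
      simp [hqa] at h
      simp [Bool.not_eq_true] at hpa
      simp [hpa]
      exact ih h

theorem find?_mono_none {p q : α → Bool} {l : List α}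
    (hqp : ∀ w, q w = true → p w = true) (h : l.find? p = none) : l.find? q = none := by
  rw [find?_eq_none] at h ⊢
  exact fun x hx hq => h x hx (hqp x hq)

theorem find?_isSome_of_mem {p : α → Bool} {l : List α} {y : α} (hy : y ∈ l)
    (hp : p y = true) : ∃ c, l.find? p = some c := by
  cases hf : l.find? p with
  | none => exact absurd hp (by rw [find?_eq_none] at hf; simpa using hf y hy)
  | some c => exact ⟨c, rfl⟩

theorem find?_prefix_false {p : α → Bool} :
    ∀ (l1 : List α) (l2 : List α), (∀ w ∈ l1, p w = false) → (l1 ++ l2).find? p = l2.find? p := by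
  intro l1
  induction l1 with
  | nil => simp
  | cons a l1 ih =>
    intro l2 h
    rw [cons_append, find?_cons, h a (mem_cons_self)]
    exact ih l2 (fun w hw => h w (mem_cons_of_mem a hw))

theorem find?_mid {p : α → Bool} {y : α} (hy : p y = false) :
    ∀ (l1 : List α) (l2 : List α), (l1 ++ y :: l2).find? p = (l1 ++ l2).find? p := by
  intro l1
  induction l1 with
  | nil => intro l2; rw [nil_append, nil_append, find?_cons, hy]
  | cons a l1 ih =>
    intro l2
    rw [cons_append, cons_append, find?_cons, find?_cons]
    cases p a
    · exact ih l2
    · rfl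

variable [DecidableEq α]

theorem idx_lt_of_append {x y : α} :
    ∀ (pre l : List α), (pre ++ x :: l).Nodup → y ∈ l →
      (pre ++ x :: l).idxOf x < (pre ++ x :: l).idxOf y := by
  intro pre
  induction pre with
  | nil =>
    intro l hnd hy
    have hx : x ∉ l := (nodup_cons.1 (by simpa using hnd)).1
    have hxy : y ≠ x := fun h => hx (h ▸ hy)
    simp only [nil_append, idxOf_cons_self, idxOf_cons_ne _ hxy.symm]
    omega
  | cons a pre ih =>
    intro l hnd hy
    have hnd' : (pre ++ x :: l).Nodup := (nodup_cons.1 (by simpa using hnd)).2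
    have ha : a ∉ pre ++ x :: l := (nodup_cons.1 (by simpa using hnd)).1
    have hax : a ≠ x := fun h => ha (by simp [h])
    have hay : a ≠ y := fun h => ha (by simp [h ▸ hy])
    rw [cons_append]
    rw [idxOf_cons_ne _ hax, idxOf_cons_ne _ hay]
    exact Nat.succ_lt_succ (ih l hnd' hy)

theorem idx_lt_of_suffix {L0 : List α} (hnd : L0.Nodup) {l : List α} {x y : α}
    (hsuf : (x :: l) <:+ L0) (hy : y ∈ l) : L0.idxOf x < L0.idxOf y := by
  obtain ⟨pre, rfl⟩ := hsuf
  exact idx_lt_of_append pre l hnd hy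

omit [DecidableEq α] in
theorem suffix_of_cons_suffix {L0 : List α} {l : List α} {a : α} (h : (a :: l) <:+ L0) :
    l <:+ L0 := (suffix_cons a l).trans h

theorem find?_idx_le {L0 l : List α} (hnd : L0.Nodup) (hsuf : l <:+ L0) {p : α → Bool}
    {c y : α} (h : l.find? p = some c) (hy : y ∈ l) (hpy : p y = true) :
    c = y ∨ L0.idxOf c < L0.idxOf y := by
  obtain ⟨l1, l2, rfl, hl1⟩ := find?_split h
  rcases mem_append.1 hy with h1 | h2
  · exact absurd hpy (by simp [hl1 y h1])
  · rcases mem_cons.1 h2 with rfl | h2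
    · exact Or.inl rfl
    · refine Or.inr (idx_lt_of_suffix hnd ?_ h2)
      exact (suffix_append l1 (c :: l2)).trans hsuf


/-- removing `u`'s partner `v` gives `u` a strictly worse partner -/
theorem DRun_rem {V : Type*} [DecidableEq V] {G : SimpleGraph V} [DecidableRel G.Adj]
    {L0 : List V} (hnd : L0.Nodup) :
    ∀ (L : List V), L <:+ L0 → ∀ (S : Finset V) (u v b : V), v ∉ S →
      MP (DRun G S L) u v → MP (DRun G (insert v S) L) u b →
      L0.idxOf v < L0.idxOf b := by
  intro L
  induction L with
  | nil =>
    intro _ S u v b _ h1 _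
    exact absurd h1 (by simp [DRun_nil, MP])
  | cons a L ih =>
    intro hsuf S u v b hv h1 h2
    have hsufL : L <:+ L0 := suffix_of_cons_suffix hsuf
    have hndaL : (a :: L).Nodup := hnd.sublist hsuf.sublist
    have haL : a ∉ L := (nodup_cons.1 hndaL).1
    by_cases ha : a ∈ S
    · rw [DRun_cons_mem ha] at h1
      rw [DRun_cons_mem (Finset.mem_insert_of_mem ha)] at h2
      exact ih hsufL S u v b hv h1 h2
    · by_cases hav : a = v
      · -- head is v itself: v is forbidden in run 2, so b comes from the tail
        subst hav
        rw [DRun_cons_mem (Finset.mem_insert_self a S)] at h2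
        exact idx_lt_of_suffix hnd hsuf (MP_spec h2).2.2.2.2
      · by_cases hau : a = u
        · -- head is u
          subst hau
          cases hf1 : L.find? (pr G S a) with
          | none =>
            rw [DRun_cons_none ha hf1] at h1
            exact absurd h1 (MP_not_mem haL)
          | some c1 =>
            rw [DRun_cons_some ha hf1] at h1
            have hc1 : c1 = v := by
              rcases MP_cases h1 with ⟨_, h⟩ | ⟨h, _⟩ | h1'
              · exact h
              · exact absurd h hav
              · exact absurd h1' (MP_not_mem haL)
            subst hc1
            have ha2 : a ∉ insert c1 S := by
              simp [Finset.mem_insert, hav, ha]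
            cases hf2 : L.find? (pr G (insert c1 S) a) with
            | none =>
              rw [DRun_cons_none ha2 hf2] at h2
              exact absurd h2 (MP_not_mem haL)
            | some c2 =>
              rw [DRun_cons_some ha2 hf2] at h2
              obtain ⟨hadj2, hc2S⟩ := pr_iff.1 (List.find?_some hf2)
              have hbc2 : b = c2 := by
                rcases MP_cases h2 with ⟨_, h⟩ | ⟨h, h'⟩ | h2'
                · exact h.symm
                · exact absurd hadj2 (h' ▸ G.irrefl)
                · exact absurd h2' (MP_not_mem haL)
              subst hbc2
              have hprb : pr G S a b = true := by
                rw [pr_iff]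
                exact ⟨hadj2, fun h => hc2S (Finset.mem_insert_of_mem h)⟩
              rcases find?_idx_le hnd hsufL hf1 (mem_of_find?_eq_some hf2) hprb with h | h
              · exact absurd h.symm (fun h' => hc2S (h' ▸ Finset.mem_insert_self _ _))
              · exact h
        · -- generic head
          cases hf1 : L.find? (pr G S a) with
          | none =>
            have hf2 : L.find? (pr G (insert v S) a) = none := by
              refine find?_mono_none (fun w hw => ?_) hf1
              rw [pr_iff] at hw ⊢
              exact ⟨hw.1, fun h => hw.2 (Finset.mem_insert_of_mem h)⟩
            rw [DRun_cons_none ha hf1] at h1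
            rw [DRun_cons_none (by simp [Finset.mem_insert, hav, ha]) hf2] at h2
            exact ih hsufL S u v b hv h1 h2
          | some c1 =>
            rw [DRun_cons_some ha hf1] at h1
            have h1' : MP (DRun G (insert c1 S) L) u v := by
              rcases MP_cases h1 with ⟨h, _⟩ | ⟨h, _⟩ | h1'
              · exact absurd h hau
              · exact absurd h hav
              · exact h1'
            obtain ⟨_, huc, hvc, _, _⟩ := MP_spec h1'
            have hc1v : c1 ≠ v := fun h => hvc (h ▸ Finset.mem_insert_self _ _)
            have hc1u : c1 ≠ u := fun h => huc (h ▸ Finset.mem_insert_self _ _)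
            obtain ⟨hadj1, hc1S⟩ := pr_iff.1 (List.find?_some hf1)
            have hf2 : L.find? (pr G (insert v S) a) = some c1 := by
              refine find?_mono_some (fun w hw => ?_) hf1 ?_
              · rw [pr_iff] at hw ⊢
                exact ⟨hw.1, fun h => hw.2 (Finset.mem_insert_of_mem h)⟩
              · rw [pr_iff]
                exact ⟨hadj1, by simp [Finset.mem_insert, hc1v, hc1S]⟩
            rw [DRun_cons_some (by simp [Finset.mem_insert, hav, ha]) hf2] at h2
            have h2' : MP (DRun G (insert c1 (insert v S)) L) u b := by
              rcases MP_cases h2 with ⟨h, _⟩ | ⟨_, h⟩ | h2'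
              · exact absurd h hau
              · exact absurd h hc1u
              · exact h2'
            rw [Finset.insert_comm] at h2'
            refine ih hsufL (insert c1 S) u v b ?_ h1' h2'
            simp [Finset.mem_insert, hv, Ne.symm hc1v]

theorem pr_mono {V : Type*} [DecidableEq V] {G : SimpleGraph V} [DecidableRel G.Adj]
    {S : Finset V} {y a : V} :
    ∀ w, pr G (insert y S) a w = true → pr G S a w = true := by
  intro w hw
  rw [pr_iff] at hw ⊢
  exact ⟨hw.1, fun h => hw.2 (Finset.mem_insert_of_mem h)⟩

theorem pr_shift {V : Type*} [DecidableEq V] {G : SimpleGraph V} [DecidableRel G.Adj]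
    {S : Finset V} {y a c : V} (h : pr G S a c = true) (hcy : c ≠ y) :
    pr G (insert y S) a c = true := by
  rw [pr_iff] at h ⊢
  exact ⟨h.1, by simp [Finset.mem_insert, hcy, h.2]⟩

theorem pr_false_elim {V : Type*} [DecidableEq V] {G : SimpleGraph V} [DecidableRel G.Adj]
    {S : Finset V} {y a w : V} (hfalse : pr G (insert y S) a w = false)
    (htrue : pr G S a w = true) : w = y := by
  by_contra hne
  rw [pr_shift htrue hne] at hfalse
  exact Bool.true_eq_false ▸ hfalse.symm ▸ rfl

theorem not_mem_insert2 {V : Type*} [DecidableEq V] {S : Finset V} {y a : V}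
    (h1 : a ≠ y) (h2 : a ∉ S) : a ∉ insert y S := by
  simp [Finset.mem_insert, h1, h2]

/-- The key "backup protection" double lemma, proven by mutual induction on the remaining
list.  Part 1: token available in run 1; part 2: token available in run 2. -/
theorem DRun_main {V : Type*} [DecidableEq V] {G : SimpleGraph V} [DecidableRel G.Adj]
    {L0 : List V} (hnd : L0.Nodup) :
    ∀ (L : List V), L <:+ L0 →
      (∀ (S : Finset V) (x v u b : V), x ∉ S → v ∉ S → x ≠ v →
        MP (DRun G (insert x S) L) u v → MP (DRun G (insert x (insert v S)) L) u b →
        ∃ w, MP (DRun G S L) u w ∧ L0.idxOf w ≤ L0.idxOf b)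
      ∧
      (∀ (S : Finset V) (t v u b : V), t ∉ S → v ∉ S → t ≠ v → t ≠ u →
        MP (DRun G S L) u v → MP (DRun G (insert v S) L) u b →
        ∃ w, MP (DRun G (insert t S) L) u w ∧ L0.idxOf w ≤ L0.idxOf b) := by
  intro L
  induction L with
  | nil =>
    intro _
    constructor
    · intro S x v u b _ _ _ h1 _
      exact absurd h1 (by simp [DRun_nil, MP])
    · intro S t v u b _ _ _ _ h1 _
      exact absurd h1 (by simp [DRun_nil, MP])
  | cons a L ih =>
    intro hsuf
    have hsufL : L <:+ L0 := suffix_of_cons_suffix hsuf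
    have hndaL : (a :: L).Nodup := hnd.sublist hsuf.sublist
    have haL : a ∉ L := (nodup_cons.1 hndaL).1
    have IH1 := (ih hsufL).1
    have IH2 := (ih hsufL).2
    constructor
    -- ==================== MAIN1 ====================
    · intro S x v u b hxS hvS hxv h2 h3
      obtain ⟨hadjuv, huSx, hvSx, _, _⟩ := MP_spec h2
      have huv : u ≠ v := hadjuv.ne
      have hux : u ≠ x := fun h => huSx (h ▸ Finset.mem_insert_self _ _)
      have huS : u ∉ S := fun h => huSx (Finset.mem_insert_of_mem h)
      by_cases ha : a ∈ S
      · rw [DRun_cons_mem (Finset.mem_insert_of_mem ha)] at h2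
        rw [DRun_cons_mem (Finset.mem_insert_of_mem (Finset.mem_insert_of_mem ha))] at h3
        rw [DRun_cons_mem ha]
        exact IH1 S x v u b hxS hvS hxv h2 h3
      · by_cases hax : a = x
        · -- head is the token x, available in run 1 only
          subst hax
          rw [DRun_cons_mem (Finset.mem_insert_self _ _), DRun_irrel haL] at h2
          rw [DRun_cons_mem (Finset.mem_insert_self _ _), DRun_irrel haL] at h3
          cases hf1 : L.find? (pr G S a) with
          | none =>
            rw [DRun_cons_none ha hf1]
            exact ⟨v, h2, le_of_lt (DRun_rem hnd L hsufL S u v b hvS h2 h3)⟩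
          | some c1 =>
            obtain ⟨hadjac1, hc1S⟩ := pr_iff.1 (List.find?_some hf1)
            rw [DRun_cons_some ha hf1]
            by_cases hc1u : c1 = u
            · subst hc1u
              exact ⟨a, Or.inr (mem_cons_self),
                le_of_lt (idx_lt_of_suffix hnd hsuf (MP_spec h3).2.2.2.2)⟩
            · by_cases hc1v : c1 = v
              · subst hc1v
                exact ⟨b, MP_cons h3, le_rfl⟩
              · obtain ⟨w, hw, hle⟩ := IH2 S c1 v u b hc1S hvS hc1v hc1u h2 h3
                exact ⟨w, MP_cons hw, hle⟩
        · by_cases hav : a = v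
          · -- head is v
            subst hav
            rw [DRun_cons_mem
              (Finset.mem_insert_of_mem (Finset.mem_insert_self _ _))] at h3
            have hbL : b ∈ L := (MP_spec h3).2.2.2.2
            have haSx : a ∉ insert x S := not_mem_insert2 hax ha
            cases hf2 : L.find? (pr G (insert x S) a) with
            | none =>
              rw [DRun_cons_none haSx hf2] at h2
              exact absurd (MP_spec h2).2.2.2.2 haL
            | some c2 =>
              rw [DRun_cons_some haSx hf2] at h2
              have hc2u : c2 = u := by
                rcases MP_cases h2 with ⟨h, _⟩ | ⟨_, h⟩ | h2'
                · exact absurd h.symm huv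
                · exact h
                · exact absurd (MP_spec h2').2.2.2.2 haL
              subst hc2u
              obtain ⟨c', hf1, hcs⟩ := find?_mono_cases pr_mono hf2
              rcases hcs with rfl | hbad
              · rw [DRun_cons_some ha hf1]
                exact ⟨a, Or.inr (mem_cons_self),
                  le_of_lt (idx_lt_of_suffix hnd hsuf hbL)⟩
              · have hc'x : c' = x :=
                  pr_false_elim hbad (List.find?_some hf1)
                subst hc'x
                rw [DRun_cons_some ha hf1]
                rw [Finset.insert_comm, DRun_irrel haL] at h3
                exact ⟨b, MP_cons h3, le_rfl⟩
          · by_cases hau : a = u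
            · -- head is u: all three runs match u now
              subst hau
              have haSxv : a ∉ insert x (insert v S) := by
                simp [Finset.mem_insert, hax, huv, huS]
              have haSx : a ∉ insert x S := not_mem_insert2 hax ha
              cases hf2 : L.find? (pr G (insert x S) a) with
              | none =>
                rw [DRun_cons_none haSx hf2] at h2
                exact absurd (MP_spec h2).2.2.2.1 haL
              | some c2 =>
                rw [DRun_cons_some haSx hf2] at h2
                obtain rfl : v = c2 := by
                  rcases MP_cases h2 with ⟨_, h⟩ | ⟨h, _⟩ | h2'
                  · exact h.symm
                  · exact absurd h huv
                  · exact absurd (MP_spec h2').2.2.2.1 haL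
                obtain ⟨hadjav, _⟩ := pr_iff.1 (List.find?_some hf2)
                have hvL : v ∈ L := mem_of_find?_eq_some hf2
                cases hf3 : L.find? (pr G (insert x (insert v S)) a) with
                | none =>
                  rw [DRun_cons_none haSxv hf3] at h3
                  exact absurd (MP_spec h3).2.2.2.1 haL
                | some c3 =>
                  rw [DRun_cons_some haSxv hf3] at h3
                  obtain ⟨hadjac3, hc3Sxv⟩ := pr_iff.1 (List.find?_some hf3)
                  have hbc3 : b = c3 := by
                    rcases MP_cases h3 with ⟨_, h⟩ | ⟨_, h⟩ | h3'
                    · exact h.symm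
                    · exact absurd hadjac3 (h ▸ G.irrefl)
                    · exact absurd (MP_spec h3').2.2.2.1 haL
                  subst hbc3
                  have hprv : pr G S a v = true := pr_iff.2 ⟨hadjav, hvS⟩
                  obtain ⟨w0, hf0⟩ := find?_isSome_of_mem hvL hprv
                  rw [DRun_cons_some ha hf0]
                  refine ⟨w0, Or.inl (mem_cons_self), ?_⟩
                  have hbL : b ∈ L := mem_of_find?_eq_some hf3
                  have hprb : pr G (insert x S) a b = true := by
                    rw [pr_iff]
                    refine ⟨hadjac3, fun h => hc3Sxv ?_⟩
                    rcases Finset.mem_insert.1 h with h | h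
                    · exact h ▸ Finset.mem_insert_self _ _
                    · exact Finset.mem_insert_of_mem (Finset.mem_insert_of_mem h)
                  have h1 : L0.idxOf w0 ≤ L0.idxOf v := by
                    rcases find?_idx_le hnd hsufL hf0 hvL hprv with h | h
                    · exact h ▸ le_rfl
                    · exact le_of_lt h
                  have h2' : L0.idxOf v ≤ L0.idxOf b := by
                    rcases find?_idx_le hnd hsufL hf2 hbL hprb with h | h
                    · exact h ▸ le_rfl
                    · exact le_of_lt h
                  exact le_trans h1 h2'
            · -- generic head
              have haSx : a ∉ insert x S := not_mem_insert2 hax ha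
              have haSxv : a ∉ insert x (insert v S) := by
                simp [Finset.mem_insert, hax, hav, ha]
              cases hf2 : L.find? (pr G (insert x S) a) with
              | none =>
                have hf3 : L.find? (pr G (insert x (insert v S)) a) = none := by
                  refine find?_mono_none (fun w hw => ?_) hf2
                  rw [pr_iff] at hw ⊢
                  refine ⟨hw.1, fun h => hw.2 ?_⟩
                  rcases Finset.mem_insert.1 h with h | h
                  · exact h ▸ Finset.mem_insert_self _ _
                  · exact Finset.mem_insert_of_mem (Finset.mem_insert_of_mem h)
                rw [DRun_cons_none haSx hf2] at h2
                rw [DRun_cons_none haSxv hf3] at h3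
                cases hf1 : L.find? (pr G S a) with
                | none =>
                  rw [DRun_cons_none ha hf1]
                  exact IH1 S x v u b hxS hvS hxv h2 h3
                | some c1 =>
                  have hbad : pr G (insert x S) a c1 = false := by
                    by_contra hb
                    rw [Bool.not_eq_false] at hb
                    exact absurd hb (by
                      rw [find?_eq_none] at hf2
                      simpa using hf2 c1 (mem_of_find?_eq_some hf1))
                  have hc1x : c1 = x := pr_false_elim hbad (List.find?_some hf1)
                  subst hc1x
                  rw [DRun_cons_some ha hf1]
                  rw [Finset.insert_comm] at h3
                  exact ⟨v, MP_cons h2,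
                    le_of_lt (DRun_rem hnd L hsufL (insert c1 S) u v b
                      (not_mem_insert2 (Ne.symm hxv) hvS) h2 h3)⟩
              | some c2 =>
                rw [DRun_cons_some haSx hf2] at h2
                have h2' : MP (DRun G (insert c2 (insert x S)) L) u v := by
                  rcases MP_cases h2 with ⟨h, _⟩ | ⟨h, _⟩ | h2'
                  · exact absurd h hau
                  · exact absurd h hav
                  · exact h2'
                obtain ⟨_, huc2, hvc2, _, _⟩ := MP_spec h2'
                have hc2u : c2 ≠ u := fun h => huc2 (h ▸ Finset.mem_insert_self _ _)
                have hc2v : c2 ≠ v := fun h => hvc2 (h ▸ Finset.mem_insert_self _ _)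
                obtain ⟨hadjac2, hc2Sx⟩ := pr_iff.1 (List.find?_some hf2)
                have hc2x : c2 ≠ x := fun h => hc2Sx (h ▸ Finset.mem_insert_self _ _)
                have hc2S : c2 ∉ S := fun h => hc2Sx (Finset.mem_insert_of_mem h)
                have hf3 : L.find? (pr G (insert x (insert v S)) a) = some c2 := by
                  refine find?_mono_some (fun w hw => ?_) hf2 ?_
                  · rw [pr_iff] at hw ⊢
                    refine ⟨hw.1, fun h => hw.2 ?_⟩
                    rcases Finset.mem_insert.1 h with h | h
                    · exact h ▸ Finset.mem_insert_self _ _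
                    · exact Finset.mem_insert_of_mem (Finset.mem_insert_of_mem h)
                  · rw [pr_iff]
                    refine ⟨hadjac2, fun h => ?_⟩
                    rcases Finset.mem_insert.1 h with h | h
                    · exact hc2x h
                    · rcases Finset.mem_insert.1 h with h | h
                      · exact hc2v h
                      · exact hc2S h
                rw [DRun_cons_some haSxv hf3] at h3
                have h3' : MP (DRun G (insert c2 (insert x (insert v S))) L) u b := by
                  rcases MP_cases h3 with ⟨h, _⟩ | ⟨_, h⟩ | h3'
                  · exact absurd h hau
                  · exact absurd h hc2u
                  · exact h3'
                obtain ⟨c1, hf1, hcs⟩ := find?_mono_cases pr_mono hf2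
                rcases hcs with rfl | hbad
                · -- all three runs pick c1 = c2
                  rw [DRun_cons_some ha hf1]
                  rw [Finset.insert_comm] at h2'
                  rw [Finset.insert_comm c1 x, Finset.insert_comm c1 v] at h3'
                  obtain ⟨w, hw, hle⟩ := IH1 (insert c1 S) x v u b
                    (not_mem_insert2 (Ne.symm hc2x) hxS)
                    (not_mem_insert2 (Ne.symm hc2v) hvS) hxv h2' h3'
                  exact ⟨w, MP_cons hw, hle⟩
                · -- run 1 grabs the token x instead
                  have hc1x : c1 = x := pr_false_elim hbad (List.find?_some hf1)
                  subst hc1x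
                  rw [DRun_cons_some ha hf1]
                  rw [Finset.insert_comm c1 v] at h3'
                  obtain ⟨w, hw, hle⟩ := IH1 (insert c1 S) c2 v u b hc2Sx
                    (not_mem_insert2 (Ne.symm hxv) hvS) hc2v h2' h3'
                  exact ⟨w, MP_cons hw, hle⟩
    -- ==================== MAIN2 ====================
    · intro S t v u b htS hvS htv htu h2 h3
      obtain ⟨hadjuv, huS, hvS', _, _⟩ := MP_spec h2
      have huv : u ≠ v := hadjuv.ne
      by_cases ha : a ∈ S
      · rw [DRun_cons_mem ha] at h2
        rw [DRun_cons_mem (Finset.mem_insert_of_mem ha)] at h3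
        rw [DRun_cons_mem (Finset.mem_insert_of_mem ha)]
        exact IH2 S t v u b htS hvS htv htu h2 h3
      · by_cases hat : a = t
        · -- head is the token t, forbidden in run 1 only
          subst hat
          rw [DRun_cons_mem (Finset.mem_insert_self _ _), DRun_irrel haL]
          cases hf2 : L.find? (pr G S a) with
          | none =>
            have hf3 : L.find? (pr G (insert v S) a) = none :=
              find?_mono_none pr_mono hf2
            rw [DRun_cons_none ha hf2] at h2
            rw [DRun_cons_none (not_mem_insert2 htv ha) hf3] at h3
            exact ⟨v, h2, le_of_lt (DRun_rem hnd L hsufL S u v b hvS h2 h3)⟩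
          | some c2 =>
            rw [DRun_cons_some ha hf2] at h2
            have h2' : MP (DRun G (insert c2 S) L) u v := by
              rcases MP_cases h2 with ⟨h, _⟩ | ⟨h, _⟩ | h2'
              · exact absurd h htu
              · exact absurd h htv
              · exact h2'
            obtain ⟨_, huc2, hvc2, _, _⟩ := MP_spec h2'
            have hc2u : c2 ≠ u := fun h => huc2 (h ▸ Finset.mem_insert_self _ _)
            have hc2v : c2 ≠ v := fun h => hvc2 (h ▸ Finset.mem_insert_self _ _)
            obtain ⟨hadjac2, hc2S⟩ := pr_iff.1 (List.find?_some hf2)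
            have hf3 : L.find? (pr G (insert v S) a) = some c2 :=
              find?_mono_some pr_mono hf2 (pr_shift (List.find?_some hf2) hc2v)
            rw [DRun_cons_some (not_mem_insert2 htv ha) hf3] at h3
            have h3' : MP (DRun G (insert c2 (insert v S)) L) u b := by
              rcases MP_cases h3 with ⟨h, _⟩ | ⟨_, h⟩ | h3'
              · exact absurd h htu
              · exact absurd h hc2u
              · exact h3'
            exact IH1 S c2 v u b hc2S hvS hc2v h2' h3'
        · by_cases hav : a = v
          · -- head is v
            subst hav
            rw [DRun_cons_mem (Finset.mem_insert_self _ _)] at h3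
            have hbL : b ∈ L := (MP_spec h3).2.2.2.2
            cases hf2 : L.find? (pr G S a) with
            | none =>
              rw [DRun_cons_none ha hf2] at h2
              exact absurd (MP_spec h2).2.2.2.2 haL
            | some c2 =>
              rw [DRun_cons_some ha hf2] at h2
              have hc2u : c2 = u := by
                rcases MP_cases h2 with ⟨h, _⟩ | ⟨_, h⟩ | h2'
                · exact absurd h.symm huv
                · exact h
                · exact absurd (MP_spec h2').2.2.2.2 haL
              subst hc2u
              have hf1 : L.find? (pr G (insert t S) a) = some c2 :=
                find?_mono_some pr_mono hf2
                  (pr_shift (List.find?_some hf2) (fun h => htu h.symm))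
              rw [DRun_cons_some (not_mem_insert2 (fun h => htv h.symm) ha) hf1]
              exact ⟨a, Or.inr (mem_cons_self),
                le_of_lt (idx_lt_of_suffix hnd hsuf hbL)⟩
          · by_cases hau : a = u
            · -- head is u
              subst hau
              cases hf2 : L.find? (pr G S a) with
              | none =>
                rw [DRun_cons_none ha hf2] at h2
                exact absurd (MP_spec h2).2.2.2.1 haL
              | some c2 =>
                rw [DRun_cons_some ha hf2] at h2
                obtain rfl : v = c2 := by
                  rcases MP_cases h2 with ⟨_, h⟩ | ⟨h, _⟩ | h2'
                  · exact h.symm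
                  · exact absurd h huv
                  · exact absurd (MP_spec h2').2.2.2.1 haL
                obtain ⟨hadjav, _⟩ := pr_iff.1 (List.find?_some hf2)
                have hvL : v ∈ L := mem_of_find?_eq_some hf2
                have haSv : a ∉ insert v S := not_mem_insert2 huv ha
                cases hf3 : L.find? (pr G (insert v S) a) with
                | none =>
                  rw [DRun_cons_none haSv hf3] at h3
                  exact absurd (MP_spec h3).2.2.2.1 haL
                | some c3 =>
                  rw [DRun_cons_some haSv hf3] at h3
                  obtain ⟨hadjac3, hc3Sv⟩ := pr_iff.1 (List.find?_some hf3)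
                  have hbc3 : b = c3 := by
                    rcases MP_cases h3 with ⟨_, h⟩ | ⟨_, h⟩ | h3'
                    · exact h.symm
                    · exact absurd hadjac3 (h ▸ G.irrefl)
                    · exact absurd (MP_spec h3').2.2.2.1 haL
                  subst hbc3
                  have hprv : pr G (insert t S) a v = true :=
                    pr_shift (pr_iff.2 ⟨hadjav, hvS⟩) (fun h => htv h.symm)
                  obtain ⟨w0, hf0⟩ := find?_isSome_of_mem hvL hprv
                  rw [DRun_cons_some (not_mem_insert2 (fun h => htu h.symm) ha) hf0]
                  refine ⟨w0, Or.inl (mem_cons_self), ?_⟩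
                  have hbL : b ∈ L := mem_of_find?_eq_some hf3
                  have hprb : pr G S a b = true := pr_mono _ (List.find?_some hf3)
                  have hle1 : L0.idxOf w0 ≤ L0.idxOf v := by
                    rcases find?_idx_le hnd hsufL hf0 hvL hprv with h | h
                    · exact h ▸ le_rfl
                    · exact le_of_lt h
                  have hle2 : L0.idxOf v ≤ L0.idxOf b := by
                    rcases find?_idx_le hnd hsufL hf2 hbL hprb with h | h
                    · exact h ▸ le_rfl
                    · exact le_of_lt h
                  exact le_trans hle1 hle2
            · -- generic head
              have haSv : a ∉ insert v S := not_mem_insert2 hav ha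
              have haSt : a ∉ insert t S := not_mem_insert2 hat ha
              cases hf2 : L.find? (pr G S a) with
              | none =>
                have hf3 : L.find? (pr G (insert v S) a) = none :=
                  find?_mono_none pr_mono hf2
                have hf1 : L.find? (pr G (insert t S) a) = none :=
                  find?_mono_none pr_mono hf2
                rw [DRun_cons_none ha hf2] at h2
                rw [DRun_cons_none haSv hf3] at h3
                rw [DRun_cons_none haSt hf1]
                exact IH2 S t v u b htS hvS htv htu h2 h3
              | some c2 =>
                rw [DRun_cons_some ha hf2] at h2
                have h2' : MP (DRun G (insert c2 S) L) u v := by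
                  rcases MP_cases h2 with ⟨h, _⟩ | ⟨h, _⟩ | h2'
                  · exact absurd h hau
                  · exact absurd h hav
                  · exact h2'
                obtain ⟨_, huc2, hvc2, _, _⟩ := MP_spec h2'
                have hc2u : c2 ≠ u := fun h => huc2 (h ▸ Finset.mem_insert_self _ _)
                have hc2v : c2 ≠ v := fun h => hvc2 (h ▸ Finset.mem_insert_self _ _)
                obtain ⟨hadjac2, hc2S⟩ := pr_iff.1 (List.find?_some hf2)
                have hf3 : L.find? (pr G (insert v S) a) = some c2 :=
                  find?_mono_some pr_mono hf2 (pr_shift (List.find?_some hf2) hc2v)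
                rw [DRun_cons_some haSv hf3] at h3
                have h3' : MP (DRun G (insert c2 (insert v S)) L) u b := by
                  rcases MP_cases h3 with ⟨h, _⟩ | ⟨_, h⟩ | h3'
                  · exact absurd h hau
                  · exact absurd h hc2u
                  · exact h3'
                by_cases hc2t : c2 = t
                · -- runs 2 and 3 grab the token t
                  subst hc2t
                  cases hf1 : L.find? (pr G (insert c2 S) a) with
                  | none =>
                    rw [DRun_cons_none haSt hf1]
                    rw [Finset.insert_comm] at h3'
                    exact ⟨v, h2',
                      le_of_lt (DRun_rem hnd L hsufL (insert c2 S) u v b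
                        (not_mem_insert2 (Ne.symm hc2v) hvS) h2' h3')⟩
                  | some c' =>
                    rw [DRun_cons_some haSt hf1]
                    obtain ⟨hadjac', hc'St⟩ := pr_iff.1 (List.find?_some hf1)
                    by_cases hc'u : c' = u
                    · subst hc'u
                      refine ⟨a, Or.inr (mem_cons_self), le_of_lt ?_⟩
                      exact idx_lt_of_suffix hnd hsuf (MP_spec h3').2.2.2.2
                    · by_cases hc'v : c' = v
                      · subst hc'v
                        rw [Finset.insert_comm] at h3'
                        exact ⟨b, MP_cons h3', le_rfl⟩
                      · rw [Finset.insert_comm] at h3'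
                        obtain ⟨w, hw, hle⟩ := IH2 (insert c2 S) c' v u b hc'St
                          (not_mem_insert2 (Ne.symm hc2v) hvS) hc'v hc'u h2' h3'
                        exact ⟨w, MP_cons hw, hle⟩
                · -- run 1 also picks c2
                  have hf1 : L.find? (pr G (insert t S) a) = some c2 :=
                    find?_mono_some pr_mono hf2
                      (pr_shift (List.find?_some hf2) hc2t)
                  rw [DRun_cons_some haSt hf1]
                  rw [Finset.insert_comm] at h3'
                  obtain ⟨w, hw, hle⟩ := IH2 (insert c2 S) t v u b
                    (not_mem_insert2 (Ne.symm hc2t) htS)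
                    (not_mem_insert2 (Ne.symm hc2v) hvS) htv htu h2' h3'
                  rw [Finset.insert_comm] at hw
                  exact ⟨w, MP_cons hw, hle⟩


theorem isMatchedL_cons {V : Type*} [DecidableEq V] {a c y : V} {M : List (V × V)} :
    isMatchedL ((a, c) :: M) y = ((a = y || c = y) || isMatchedL M y) := by
  simp [isMatchedL, List.any_cons]

theorem foldl_eq_DRun {V : Type*} [DecidableEq V] (G : SimpleGraph V) [DecidableRel G.Adj]
    (order : List V) (hnd : order.Nodup) :
    ∀ (tail Pre : List V) (M : List (V × V)) (S : Finset V),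
      order = Pre ++ tail →
      (∀ y, isMatchedL M y = true ↔ y ∈ S) →
      (∀ y ∈ Pre, isMatchedL M y = false → ∀ z ∈ order,
        ¬(G.Adj y z ∧ isMatchedL M z = false)) →
      tail.foldl (rankingStepF G [] order) M = (DRun G S tail).reverse ++ M := by
  intro tail
  induction tail with
  | nil => intro Pre M S _ _ _; simp [DRun_nil]
  | cons a tail ihT =>
    intro Pre M S horder hS hInert
    have haorder : a ∈ order := horder ▸ (by simp)
    have hatail : a ∉ tail := by
      have h1 : (a :: tail).Nodup :=
        ((horder ▸ hnd).sublist (List.sublist_append_right Pre (a :: tail)))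
      exact (nodup_cons.1 h1).1
    rw [foldl_cons]
    by_cases hma : isMatchedL M a = true
    · have hstep : rankingStepF G [] order M a = M := by
        rw [rankingStepF, if_pos (Or.inr hma)]
      rw [hstep, DRun_cons_mem ((hS a).1 hma)]
      refine ihT (Pre ++ [a]) M S (by rw [horder, append_assoc]; rfl) hS ?_
      intro y hy hym
      rcases mem_append.1 hy with hy | hy
      · exact hInert y hy hym
      · obtain rfl := (mem_singleton.1 hy).symm
        rw [hma] at hym; exact absurd hym (by simp)
    · have haS : a ∉ S := fun h => hma ((hS a).2 h)
      have hnotmatched : ¬ (a ∈ ([] : List V) ∨ isMatchedL M a = true) := by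
        simp [hma]
      have hPB : ∀ w, (fun w => decide (G.Adj a w) && !(decide (w ∈ ([] : List V)))
          && !isMatchedL M w) w = pr G S a w := by
        intro w
        show (decide (G.Adj a w) && !(decide (w ∈ ([] : List V))) && !isMatchedL M w)
          = pr G S a w
        have h1 : (!isMatchedL M w) = decide (w ∉ S) := by
          by_cases h : w ∈ S
          · rw [(hS w).2 h]; simp [h]
          · have : isMatchedL M w = false := by
              cases hm : isMatchedL M w
              · rfl
              · exact absurd ((hS w).1 hm) h
            rw [this]; simp [h]
        rw [pr]
        simp only [List.not_mem_nil, decide_false, Bool.not_false, Bool.and_true, h1]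
      have hfind : order.find? (fun w => decide (G.Adj a w)
          && !(decide (w ∈ ([] : List V))) && !isMatchedL M w) = tail.find? (pr G S a) := by
        rw [horder]
        rw [find?_prefix_false Pre (a :: tail) ?hpre]
        case hpre =>
          intro y hy
          by_cases hym : isMatchedL M y = true
          · simp [hym]
          · have hym' : isMatchedL M y = false := by
              cases h : isMatchedL M y
              · rfl
              · exact absurd h hym
            have hnadj : ¬ G.Adj y a := by
              intro hadj
              exact hInert y hy hym' a haorder ⟨hadj, by
                cases h : isMatchedL M a
                · rfl
                · exact absurd h hma⟩
            have : ¬ G.Adj a y := fun h => hnadj h.symm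
            simp [this]
        rw [find?_cons]
        have : ¬ G.Adj a a := G.irrefl
        simp only [this, decide_false, Bool.false_and, Bool.and_eq_true]
        exact find?_congr' (fun w _ => hPB w)
      cases hf : tail.find? (pr G S a) with
      | none =>
        have hstep : rankingStepF G [] order M a = M := by
          rw [rankingStepF, if_neg hnotmatched, hfind, hf]
        rw [hstep, DRun_cons_none haS hf]
        refine ihT (Pre ++ [a]) M S (by rw [horder, append_assoc]; rfl) hS ?_
        intro y hy hym
        rcases mem_append.1 hy with hy | hy
        · exact hInert y hy hym
        · obtain rfl := (mem_singleton.1 hy).symm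
          intro z hz hzbad
          have : order.find? (fun w => decide (G.Adj a w)
              && !(decide (w ∈ ([] : List V))) && !isMatchedL M w) = none := by
            rw [hfind, hf]
          rw [find?_eq_none] at this
          exact this z hz (by simp [hzbad.1, hzbad.2])
      | some c =>
        have hstep : rankingStepF G [] order M a = (a, c) :: M := by
          rw [rankingStepF, if_neg hnotmatched, hfind, hf]
        rw [hstep, DRun_cons_some haS hf]
        have hrec := ihT (Pre ++ [a]) ((a, c) :: M) (insert a (insert c S))
          (by rw [horder, append_assoc]; rfl) ?hS' ?hInert'
        case hS' =>
          intro y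
          rw [isMatchedL_cons]
          simp only [Finset.mem_insert, Bool.or_eq_true, decide_eq_true_eq, beq_iff_eq]
          constructor
          · rintro ((h | h) | h)
            · exact Or.inl (by simpa using h.symm)
            · exact Or.inr (Or.inl (by simpa using h.symm))
            · exact Or.inr (Or.inr ((hS y).1 h))
          · rintro (rfl | rfl | h)
            · simp
            · simp
            · simp [(hS y).2 h]
        case hInert' =>
          intro y hy hym z hz hzbad
          have hymM : isMatchedL M y = false := by
            cases h : isMatchedL M y
            · rfl
            · rw [isMatchedL_cons, h] at hym; simp at hym
          have hzM : isMatchedL M z = false := by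
            cases h : isMatchedL M z
            · rfl
            · rw [isMatchedL_cons, h] at hzbad; simp at hzbad
          rcases mem_append.1 hy with hy | hy
          · exact hInert y hy hymM z hz ⟨hzbad.1, hzM⟩
          · obtain rfl := (mem_singleton.1 hy).symm
            rw [isMatchedL_cons] at hym; simp at hym
        rw [hrec, DRun_irrel hatail]
        rw [reverse_cons, append_assoc]
        rfl

theorem rankingList_eq_DRun {V : Type*} [DecidableEq V] (G : SimpleGraph V)
    [DecidableRel G.Adj] (order : List V) (hnd : order.Nodup) :
    rankingList G order = (DRun G ∅ order).reverse := by
  have := foldl_eq_DRun G order hnd order [] [] ∅ rfl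
    (by intro y; simp [isMatchedL]) (by intro y hy; simp at hy)
  rw [rankingList, this, append_nil]

theorem matchedTo_iff_MP {V : Type*} [DecidableEq V] (G : SimpleGraph V)
    [DecidableRel G.Adj] (order : List V) (hnd : order.Nodup) (u w : V) :
    matchedTo G order u w ↔ MP (DRun G ∅ order) u w := by
  rw [matchedTo, MP, rankingList_eq_DRun G order hnd]
  simp [List.mem_reverse]

theorem insertIdx_eq_take_drop {α : Type*} (a : α) :
    ∀ (i : ℕ) (l : List α), i ≤ l.length →
      l.insertIdx i a = l.take i ++ a :: l.drop i := by
  intro i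
  induction i with
  | zero => intro l _; simp
  | succ i ih =>
    intro l hl
    cases l with
    | nil => simp at hl
    | cons x l =>
      rw [insertIdx_succ_cons, ih l (by simpa using hl)]
      simp

end BKaux

/-- Backup protection: if Ranking on `σ₋ᵤ*` matches `u` to `v` and `u` has backup `b`
(its match after additionally removing `v`), then for any `σ` obtained by inserting `u*`
at an arbitrary rank, `u` is matched in `R(σ)` to some `w` with `σ(w) ≤ σ(b)`. -/
theorem stmt14 {V : Type*} [DecidableEq V] (G : SimpleGraph V) [DecidableRel G.Adj]
    (order : List V) (hnd : order.Nodup) (ustar : V) (hu : ustar ∉ order)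
    (hall : ∀ x : V, x ≠ ustar → x ∈ order)
    (u v b : V) (hmatch : matchedTo G order u v)
    (hbackup : matchedTo G (order.erase v) u b)
    (i : ℕ) (hi : i ≤ order.length) :
    ∃ w : V, matchedTo G (order.insertIdx i ustar) u w ∧
      (order.insertIdx i ustar).idxOf w ≤ (order.insertIdx i ustar).idxOf b := by
  classical
  have h2o : BKaux.MP (BKaux.DRun G ∅ order) u v :=
    (BKaux.matchedTo_iff_MP G order hnd u v).1 hmatch
  have hnderase : (order.erase v).Nodup := hnd.erase v
  have h3o : BKaux.MP (BKaux.DRun G ∅ (order.erase v)) u b :=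
    (BKaux.matchedTo_iff_MP G (order.erase v) hnderase u b).1 hbackup
  have hvorder : v ∈ order := (BKaux.MP_spec h2o).2.2.2.2
  have hxv : ustar ≠ v := fun h => hu (h ▸ hvorder)
  set L0 := order.insertIdx i ustar with hL0
  have hrepr : L0 = order.take i ++ ustar :: order.drop i :=
    BKaux.insertIdx_eq_take_drop ustar i order hi
  have hperm : L0.Perm (ustar :: order) := by
    rw [hrepr]
    have := List.perm_middle (a := ustar) (l₁ := order.take i) (l₂ := order.drop i)
    rw [take_append_drop] at this
    exact this
  have hndL0 : L0.Nodup := hperm.nodup_iff.2 (nodup_cons.2 ⟨hu, hnd⟩)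
  -- translate run on order to run on L0 with ustar forbidden
  have eqA : BKaux.DRun G (insert ustar ∅) L0 = BKaux.DRun G ∅ order := by
    rw [hrepr, BKaux.DRun_mid (order.take i) (Finset.mem_insert_self _ _),
      take_append_drop, BKaux.DRun_irrel hu]
  have eqB : BKaux.DRun G (insert ustar (insert v ∅)) L0
      = BKaux.DRun G ∅ (order.erase v) := by
    rw [hrepr, BKaux.DRun_mid (order.take i) (Finset.mem_insert_self _ _),
      take_append_drop, BKaux.DRun_irrel hu]
    obtain ⟨l1, l2, hvl1, horder2, herase⟩ := List.exists_erase_eq hvorder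
    have hnd2 : (l1 ++ v :: l2).Nodup := horder2 ▸ hnd
    have hvl2 : v ∉ l1 ++ l2 := by
      intro h
      rcases mem_append.1 h with h | h
      · exact hvl1 h
      · have := (List.nodup_append.1 hnd2).2.1
        exact (nodup_cons.1 this).1 h
    rw [herase, horder2, BKaux.DRun_mid l1 (Finset.mem_insert_self _ _),
      BKaux.DRun_irrel hvl2]
  have h2 : BKaux.MP (BKaux.DRun G (insert ustar ∅) L0) u v := by rw [eqA]; exact h2o
  have h3 : BKaux.MP (BKaux.DRun G (insert ustar (insert v ∅)) L0) u b := by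
    rw [eqB]; exact h3o
  obtain ⟨w, hw, hle⟩ := (BKaux.DRun_main hndL0 L0 suffix_rfl).1 ∅ ustar v u b
    (Finset.notMem_empty _) (Finset.notMem_empty _) hxv h2 h3
  exact ⟨w, (BKaux.matchedTo_iff_MP G L0 hndL0 u w).2 hw, hle⟩
end

section
/- Monotonicity without backup: Let σ be a permutation on V \ {u*} under which Ranking matches u to v and u has no backup (removing v leaves u unmatched). Then for every rank i with σ(v) ≤ i ≤ |V|−1, in the permutation σ_v^i (v moved to rank i, other relative orders preserved), Ranking still matches u to v and u still has no backup. -/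
open List

variable {V : Type*}

section ListHelpers
variable {α : Type*}

theorem myInsertIdx_eq (a : α) : ∀ (n : ℕ) (l : List α), n ≤ l.length →
    l.insertIdx n a = l.take n ++ a :: l.drop n
  | 0, l, _ => by simp [insertIdx_zero]
  | n+1, [], h => by simp at h
  | n+1, x :: t, h => by
    rw [insertIdx_succ_cons, myInsertIdx_eq a n t (by simpa using h)]
    simp

theorem myErase_eq [DecidableEq α] (a : α) : ∀ (l : List α), a ∈ l →
    l.erase a = l.take (l.idxOf a) ++ l.drop (l.idxOf a + 1)
  | [], h => by simp at h
  | x :: t, h => by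
    by_cases hxa : x = a
    · subst hxa
      simp
    · have ha : a ∈ t := by
        rcases mem_cons.1 h with h' | h'
        · exact absurd h'.symm hxa
        · exact h'
      rw [List.erase_cons_tail (by simpa using fun h' => hxa h'),
        myErase_eq a t ha]
      have : (x :: t).idxOf a = t.idxOf a + 1 := by
        rw [List.idxOf_cons_ne _ (by simpa using hxa)]
      rw [this]
      simp

theorem find?_pre {p : α → Bool} {l1 l2 : List α} {b : α}
    (h1 : ∀ x ∈ l1, p x = false) (hb : p b = true) :
    (l1 ++ b :: l2).find? p = some b := by
  rw [find?_append, find?_eq_none.2 (fun x hx => by simp [h1 x hx]),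
    find?_cons_of_pos hb]
  rfl

theorem find?_nodup_prefix {p : α → Bool} {b : α} :
    ∀ {l1 l2 : List α}, (l1 ++ b :: l2).Nodup →
      (l1 ++ b :: l2).find? p = some b → ∀ x ∈ l1, p x = false
  | [], l2, _, _ => by simp
  | a :: t, l2, hnd, hf => by
    rw [cons_append] at hnd hf
    intro x hx
    have hab : a ≠ b := by
      intro h
      exact (nodup_cons.1 hnd).1 (h ▸ (by simp : b ∈ t ++ b :: l2))
    have hpa : p a = false := by
      by_contra hpa'
      have hpa2 : p a = true := by simpa using hpa'
      rw [find?_cons_of_pos hpa2] at hf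
      exact hab (by simpa using hf)
    rcases mem_cons.1 hx with h' | h'
    · subst h'; exact hpa
    · have hf' : (t ++ b :: l2).find? p = some b := by
        rw [find?_cons_of_neg (by simp [hpa])] at hf
        exact hf
      exact find?_nodup_prefix (nodup_cons.1 hnd).2 hf' x h'

theorem find_ins {p : α → Bool} (E : List α) (v : α) {j k : ℕ} (hjk : j ≤ k) (hk : k ≤ E.length)
    (h : (E.take j ++ v :: E.drop j).find? p ≠ some v) :
    (E.take k ++ v :: E.drop k).find? p = (E.take j ++ v :: E.drop j).find? p ∧
      E.find? p = (E.take j ++ v :: E.drop j).find? p := by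
  have htk : E.take k = E.take j ++ (E.drop j).take (k - j) := by
    rw [← take_add, Nat.add_sub_cancel' hjk]
  have hdj : E.drop j = (E.drop j).take (k - j) ++ E.drop k := by
    conv_lhs => rw [← take_append_drop (k - j) (E.drop j)]
    rw [drop_drop, Nat.add_sub_cancel' hjk]
  cases h1 : (E.take j).find? p with
  | some w =>
    have hins : (E.take j ++ v :: E.drop j).find? p = some w := by
      rw [find?_append, h1, Option.some_or]
    refine ⟨?_, ?_⟩
    · rw [hins, htk, find?_append, find?_append, h1, Option.some_or, Option.some_or]
    · conv_lhs => rw [← take_append_drop j E]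
      rw [hins, find?_append, h1, Option.some_or]
  | none =>
    cases hpv : p v with
    | true =>
      exfalso
      apply h
      rw [find?_append, h1, Option.none_or, find?_cons_of_pos hpv]
    | false =>
      have hins : (E.take j ++ v :: E.drop j).find? p = (E.drop j).find? p := by
        rw [find?_append, h1, Option.none_or, find?_cons_of_neg (by simp [hpv])]
      refine ⟨?_, ?_⟩
      · rw [hins, htk, find?_append, find?_append, h1, Option.none_or,
          find?_cons_of_neg (by simp [hpv])]
        conv_rhs => rw [hdj]
        rw [find?_append]
      · conv_lhs => rw [← take_append_drop j E]
        rw [hins, find?_append, h1, Option.none_or]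

end ListHelpers

section RankingAux
variable [DecidableEq V] (G : SimpleGraph V) [DecidableRel G.Adj]

def qB (x : V) (M : List (V × V)) (w : V) : Bool :=
  decide (G.Adj x w) && !isMatchedL M w

theorem step_eq (O : List V) (M : List (V × V)) (x : V) :
    rankingStepF G [] O M x =
      if isMatchedL M x = true then M
      else match O.find? (qB G x M) with
        | some w => (x, w) :: M
        | none => M := by
  unfold rankingStepF
  have hpred : (fun w => decide (G.Adj x w) && !(decide (w ∈ ([] : List V)))
      && !isMatchedL M w) = qB G x M := by
    funext w; simp [qB]
  rw [hpred]
  by_cases h : isMatchedL M x = true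
  · simp [h]
  · simp [h]

def AP (O : List V) (t : ℕ) : List (V × V) := rankingPartialF G [] O t

theorem AP_zero (O : List V) : AP G O 0 = [] := rfl

theorem AP_succ {O : List V} {t : ℕ} (h : t < O.length) :
    AP G O (t + 1) = rankingStepF G [] O (AP G O t) (O[t]'h) := by
  unfold AP rankingPartialF
  have h2 : O.take (t + 1) = O.take t ++ [O[t]] := by
    rw [take_succ, getElem?_eq_getElem h]
    rfl
  rw [h2, foldl_append, foldl_cons, foldl_nil]

theorem AP_stab {O : List V} {t : ℕ} (h : O.length ≤ t) : AP G O t = rankingList G O := by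
  unfold AP rankingPartialF rankingList
  rw [take_of_length_le h]

theorem step_suffix (O : List V) (M : List (V × V)) (x : V) :
    M <:+ rankingStepF G [] O M x := by
  rw [step_eq]
  split
  · exact suffix_refl _
  · split
    · exact suffix_cons _ _
    · exact suffix_refl _

theorem AP_suffix (O : List V) {t t' : ℕ} (h : t ≤ t') : AP G O t <:+ AP G O t' := by
  induction t' with
  | zero => rw [Nat.le_zero.1 h]
  | succ n ih =>
    rcases Nat.eq_or_lt_of_le h with h1 | h1
    · rw [h1]
    · refine (ih (by omega)).trans ?_
      by_cases hn : n < O.length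
      · rw [AP_succ G hn]; exact step_suffix G O _ _
      · rw [AP_stab G (by omega), AP_stab G (by omega)]

theorem AP_suffix_ranking (O : List V) (t : ℕ) : AP G O t <:+ rankingList G O := by
  rcases le_total t O.length with h | h
  · rw [← AP_stab G (le_refl O.length)]; exact AP_suffix G O h
  · rw [AP_stab G h]

theorem isMatchedL_iff {M : List (V × V)} {a : V} :
    isMatchedL M a = true ↔ ∃ p ∈ M, p.1 = a ∨ p.2 = a := by
  simp [isMatchedL, List.any_eq_true]

theorem matched_mono {M M' : List (V × V)} {a : V} (h : M <:+ M')
    (hm : isMatchedL M a = true) : isMatchedL M' a = true := by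
  rw [isMatchedL_iff] at hm ⊢
  obtain ⟨p, hp, h2⟩ := hm
  exact ⟨p, h.subset hp, h2⟩

theorem unmatched_anti {M M' : List (V × V)} {a : V} (h : M <:+ M')
    (hm : isMatchedL M' a = false) : isMatchedL M a = false := by
  cases hx : isMatchedL M a with
  | false => rfl
  | true => rw [matched_mono h hx] at hm; simp at hm

theorem qB_false_mono {M M' : List (V × V)} (h : M <:+ M') {a b : V}
    (hq : qB G a M b = false) : qB G a M' b = false := by
  by_cases hadj : G.Adj a b
  · simp [qB, hadj] at hq ⊢
    exact matched_mono h hq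
  · simp [qB, hadj]

def ValidM (O : List V) (M : List (V × V)) : Prop :=
  (∀ p ∈ M, p.1 ∈ O ∧ p.2 ∈ O ∧ G.Adj p.1 p.2) ∧
  ∀ p ∈ M, ∀ p' ∈ M, (p.1 = p'.1 ∨ p.1 = p'.2 ∨ p.2 = p'.1 ∨ p.2 = p'.2) → p = p'

theorem valid_step {O : List V} {M : List (V × V)} {x : V} (hx : x ∈ O)
    (h : ValidM G O M) : ValidM G O (rankingStepF G [] O M x) := by
  rw [step_eq]
  split
  · exact h
  · rename_i hmx
    split
    · rename_i w hf
      have hq := List.find?_some hf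
      simp only [qB, Bool.and_eq_true, decide_eq_true_eq, Bool.not_eq_true'] at hq
      obtain ⟨hadj, hmw⟩ := hq
      have hwO := mem_of_find?_eq_some hf
      have hnx : ∀ q ∈ M, q.1 ≠ x ∧ q.2 ≠ x := by
        intro q hq
        constructor <;> intro e <;> exact hmx (isMatchedL_iff.2 ⟨q, hq, by simp [e]⟩)
      have hnw : ∀ q ∈ M, q.1 ≠ w ∧ q.2 ≠ w := by
        intro q hq
        constructor <;> intro e
        · rw [isMatchedL_iff.2 ⟨q, hq, by simp [e]⟩] at hmw; simp at hmw
        · rw [isMatchedL_iff.2 ⟨q, hq, by simp [e]⟩] at hmw; simp at hmw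
      constructor
      · intro p hp
        rcases mem_cons.1 hp with h' | h'
        · subst h'; exact ⟨hx, hwO, hadj⟩
        · exact h.1 p h'
      · intro p hp p' hp' hsh
        rcases mem_cons.1 hp with h1 | h1 <;> rcases mem_cons.1 hp' with h2 | h2
        · rw [h1, h2]
        · subst h1
          exfalso
          rcases hsh with e | e | e | e
          · exact (hnx p' h2).1 e.symm
          · exact (hnx p' h2).2 e.symm
          · exact (hnw p' h2).1 e.symm
          · exact (hnw p' h2).2 e.symm
        · subst h2
          exfalso
          rcases hsh with e | e | e | e
          · exact (hnx p h1).1 e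
          · exact (hnw p h1).1 e
          · exact (hnx p h1).2 e
          · exact (hnw p h1).2 e
        · exact h.2 p h1 p' h2 hsh
    · exact h

theorem valid_AP (O : List V) (t : ℕ) : ValidM G O (AP G O t) := by
  induction t with
  | zero => exact ⟨by simp [AP_zero], by simp [AP_zero]⟩
  | succ n ih =>
    by_cases hn : n < O.length
    · rw [AP_succ G hn]; exact valid_step G (getElem_mem hn) ih
    · rw [AP_stab G (by omega)]
      rw [AP_stab G (by omega)] at ih
      exact ih

theorem valid_ranking (O : List V) : ValidM G O (rankingList G O) := by
  rw [← AP_stab G (le_refl O.length)]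
  exact valid_AP G O O.length

end RankingAux


section RankingAux
variable [DecidableEq V] (G : SimpleGraph V) [DecidableRel G.Adj]

theorem step_matched {O : List V} {M : List (V × V)} {x : V} (hm : isMatchedL M x = true) :
    rankingStepF G [] O M x = M := by
  rw [step_eq, if_pos hm]

theorem step_none {O : List V} {M : List (V × V)} {x : V} (hm : isMatchedL M x = false)
    (hf : O.find? (qB G x M) = none) : rankingStepF G [] O M x = M := by
  rw [step_eq, if_neg (by simp [hm]), hf]

theorem step_some {O : List V} {M : List (V × V)} {x w : V} (hm : isMatchedL M x = false)
    (hf : O.find? (qB G x M) = some w) : rankingStepF G [] O M x = (x, w) :: M := by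
  rw [step_eq, if_neg (by simp [hm]), hf]

end RankingAux

/-- Monotonicity without backup: if Ranking on `σ` matches `u` to `v` and `u` has no
backup (removing `v` leaves `u` unmatched), then for every rank `i` with
`σ(v) ≤ i ≤ |V| - 1`, in the permutation obtained by moving `v` to rank `i` Ranking still
matches `u` to `v` and `u` still has no backup. -/
theorem stmt17 {V : Type*} [DecidableEq V] (G : SimpleGraph V) [DecidableRel G.Adj]
    (order : List V) (hnd : order.Nodup) (u v : V) (hv : v ∈ order)
    (hmatch : matchedTo G order u v)
    (hnb : ¬ isMatchedInRanking G (order.erase v) u) :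
    ∀ i : ℕ, order.idxOf v ≤ i → i ≤ order.length - 1 →
      matchedTo G ((order.erase v).insertIdx i v) u v ∧
      ¬ isMatchedInRanking G (((order.erase v).insertIdx i v).erase v) u := by
  intro i hri hile
  classical
  set E := order.erase v with hEdef
  have hEnd : E.Nodup := hnd.erase v
  have hvE : v ∉ E := hnd.not_mem_erase
  have hlenE : E.length = order.length - 1 := length_erase_of_mem hv
  have hlord : 0 < order.length := length_pos_of_mem hv
  have hiE : i ≤ E.length := by omega
  set r := order.idxOf v with hrdef
  have hr : r < order.length := idxOf_lt_length_iff.2 hv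
  have hrE : r ≤ E.length := by omega
  have hriI : r ≤ i := hri
  set Or' := E.take r ++ v :: E.drop r with hOrdef
  have horder : order = Or' := by
    have h1 : order.take r ++ v :: order.drop (r + 1) = order := by
      conv_rhs => rw [← take_append_drop r order]
      rw [drop_eq_getElem_cons hr, getElem_idxOf hr]
    have h2 : E = order.take r ++ order.drop (r + 1) := by
      rw [hEdef, myErase_eq v order hv, ← hrdef]
    have hl : (order.take r).length = r := by
      rw [length_take]; omega
    have h3 : E.take r = order.take r := by
      rw [h2, take_left' hl]
    have h4 : E.drop r = order.drop (r + 1) := by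
      rw [h2, drop_left' hl]
    rw [hOrdef, h3, h4, h1]
  set L' := E.take i ++ v :: E.drop i with hL'def
  have hins : E.insertIdx i v = L' := myInsertIdx_eq v i E hiE
  have htklen : ∀ j, j ≤ E.length → (E.take j).length = j := by
    intro j hj; rw [length_take]; omega
  have hlenL' : L'.length = E.length + 1 := by
    rw [hL'def]; simp [htklen i hiE]; omega
  have hlenOr : Or'.length = E.length + 1 := by
    rw [hOrdef]; simp [htklen r hrE]; omega
  have hgetlt : ∀ (j s : ℕ) (hj : j ≤ E.length) (hs : s < j)
      (h1 : s < (E.take j ++ v :: E.drop j).length) (h2 : s < E.length),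
      (E.take j ++ v :: E.drop j)[s]'h1 = E[s]'h2 := by
    intro j s hj hs h1 h2
    rw [getElem_append_left (by rw [htklen j hj]; omega)]
    exact getElem_take
  have hgetself : ∀ (j : ℕ) (hj : j ≤ E.length)
      (h1 : j < (E.take j ++ v :: E.drop j).length),
      (E.take j ++ v :: E.drop j)[j]'h1 = v := by
    intro j hj h1
    rw [getElem_append_right (by rw [htklen j hj])]
    simp [htklen j hj]
  have hL'erase : L'.erase v = E := by
    rw [hL'def, erase_append_right _ (fun hmem => hvE (take_subset _ _ hmem)),
      erase_cons_head, take_append_drop]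
  -- facts from the matching on `order`
  obtain ⟨hvalO, hdisjO⟩ := valid_ranking G Or'
  rw [horder] at hmatch
  have hadj : G.Adj u v := by
    rcases hmatch with h | h
    · exact (hvalO _ h).2.2
    · exact ((hvalO _ h).2.2).symm
  have hadj' : G.Adj v u := hadj.symm
  have huv : u ≠ v := G.ne_of_adj hadj
  have huord : u ∈ order := by
    rw [horder]
    rcases hmatch with h | h
    · exact (hvalO _ h).1
    · exact (hvalO _ h).2.1
  have huE : u ∈ E := (mem_erase_of_ne huv).2 huord
  set pE := E.idxOf u with hpEdef
  have hpE : pE < E.length := idxOf_lt_length_iff.2 huE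
  have hgetpE : E[pE]'hpE = u := getElem_idxOf hpE
  -- u is never matched in the run on E
  have hnbF : isMatchedL (rankingList G E) u = false := by
    cases hx : isMatchedL (rankingList G E) u with
    | false => rfl
    | true =>
      exfalso
      obtain ⟨p, hp, hcase⟩ := isMatchedL_iff.1 hx
      apply hnb
      rcases hcase with h1 | h1
      · exact ⟨p.2, Or.inl (by rw [← h1, Prod.mk.eta]; exact hp)⟩
      · exact ⟨p.1, Or.inr (by rw [← h1, Prod.mk.eta]; exact hp)⟩
  have F1 : ∀ t, isMatchedL (AP G E t) u = false :=
    fun t => unmatched_anti (AP_suffix_ranking G E t) hnbF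
  have Fv : ∀ t, isMatchedL (AP G E t) v = false := by
    intro t
    cases hx : isMatchedL (AP G E t) v with
    | false => rfl
    | true =>
      exfalso
      obtain ⟨p, hp, hcase⟩ := isMatchedL_iff.1 hx
      have hval := (valid_AP G E t).1 p hp
      rcases hcase with h1 | h1
      · exact hvE (h1 ▸ hval.1)
      · exact hvE (h1 ▸ hval.2.1)
  have F2 : E.find? (qB G u (AP G E pE)) = none := by
    cases hf : E.find? (qB G u (AP G E pE)) with
    | none => rfl
    | some w =>
      exfalso
      have hstep := AP_succ G hpE
      rw [hgetpE, step_some G (F1 pE) hf] at hstep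
      have hmt : isMatchedL (AP G E (pE + 1)) u = true := by
        rw [hstep]; exact isMatchedL_iff.2 ⟨(u, w), by simp, Or.inl rfl⟩
      rw [F1 (pE + 1)] at hmt; simp at hmt
  -- Phase 1: the three runs coincide up to min pE r
  have phase1 : ∀ s, s ≤ min pE r → AP G L' s = AP G E s ∧ AP G Or' s = AP G E s := by
    intro s
    induction s with
    | zero => intro _; exact ⟨rfl, rfl⟩
    | succ n ih =>
      intro hs
      have hn := ih (by omega)
      have hnpE : n < pE := by omega
      have hnr : n < r := by omega
      have hnE : n < E.length := by omega
      have hnL' : n < L'.length := by omega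
      have hnOr : n < Or'.length := by omega
      have hgL : L'[n]'hnL' = E[n]'hnE := hgetlt i n hiE (by omega) _ _
      have hgO : Or'[n]'hnOr = E[n]'hnE := hgetlt r n hrE hnr _ _
      set x := E[n]'hnE with hxdef
      have hxu : x ≠ u := by
        intro e
        have : n = pE := hEnd.getElem_inj_iff.1 (e.trans hgetpE.symm)
        omega
      have hxv : x ≠ v := fun e => hvE (e ▸ getElem_mem hnE)
      cases hm : isMatchedL (AP G E n) x with
      | true =>
        have e1 : AP G L' (n + 1) = AP G E n := by
          rw [AP_succ G hnL', hgL, hn.1, step_matched G hm]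
        have e2 : AP G E (n + 1) = AP G E n := by
          rw [AP_succ G hnE, step_matched G hm]
        have e3 : AP G Or' (n + 1) = AP G E n := by
          rw [AP_succ G hnOr, hgO, hn.2, step_matched G hm]
        exact ⟨e1.trans e2.symm, e3.trans e2.symm⟩
      | false =>
        have hcv : Or'.find? (qB G x (AP G E n)) ≠ some v := by
          intro hfv
          have hstepv : AP G Or' (n + 1) = (x, v) :: AP G E n := by
            rw [AP_succ G hnOr, hgO, hn.2, step_some G hm hfv]
          have hmem : (x, v) ∈ rankingList G Or' :=
            (AP_suffix_ranking G Or' (n + 1)).subset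
              (by rw [hstepv]; exact mem_cons_self)
          rcases hmatch with hP | hP
          · have he := hdisjO (x, v) hmem (u, v) hP (by simp)
            exact hxu (by simpa using congrArg Prod.fst he)
          · have he := hdisjO (x, v) hmem (v, u) hP (by simp)
            exact hxv (by simpa using congrArg Prod.fst he)
        obtain ⟨hkI, hkE⟩ := find_ins E v hriI hiE hcv
        cases hc : Or'.find? (qB G x (AP G E n)) with
        | none =>
          rw [hc] at hkI hkE
          have e1 : AP G L' (n + 1) = AP G E n := by
            rw [AP_succ G hnL', hgL, hn.1, step_none G hm hkI]
          have e2 : AP G E (n + 1) = AP G E n := by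
            rw [AP_succ G hnE, step_none G hm hkE]
          have e3 : AP G Or' (n + 1) = AP G E n := by
            rw [AP_succ G hnOr, hgO, hn.2, step_none G hm hc]
          exact ⟨e1.trans e2.symm, e3.trans e2.symm⟩
        | some w =>
          rw [hc] at hkI hkE
          have e1 : AP G L' (n + 1) = (x, w) :: AP G E n := by
            rw [AP_succ G hnL', hgL, hn.1, step_some G hm hkI]
          have e2 : AP G E (n + 1) = (x, w) :: AP G E n := by
            rw [AP_succ G hnE, step_some G hm hkE]
          have e3 : AP G Or' (n + 1) = (x, w) :: AP G E n := by
            rw [AP_succ G hnOr, hgO, hn.2, step_some G hm hc]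
          exact ⟨e1.trans e2.symm, e3.trans e2.symm⟩
  -- derive the key membership
  have key : (u, v) ∈ rankingList G L' ∨ (v, u) ∈ rankingList G L' := by
    rcases lt_or_ge pE r with hpEr | hrpE
    · -- Case A : u comes before v in the original order; u picks v
      have h1 := (phase1 pE (by omega)).1
      have hpEi : pE < i := by omega
      have hpEL' : pE < L'.length := by omega
      have hgU : L'[pE]'hpEL' = u := (hgetlt i pE hiE hpEi hpEL' hpE).trans hgetpE
      have hfindv : L'.find? (qB G u (AP G E pE)) = some v := by
        show (E.take i ++ v :: E.drop i).find? (qB G u (AP G E pE)) = some v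
        apply find?_pre
        · intro x hx
          have hxE : x ∈ E := take_subset _ _ hx
          have hq := find?_eq_none.1 F2 x hxE
          simpa using hq
        · simp [qB, hadj, Fv pE]
      have hstep : AP G L' (pE + 1) = (u, v) :: AP G E pE := by
        rw [AP_succ G hpEL', hgU, h1, step_some G (F1 pE) hfindv]
      exact Or.inl ((AP_suffix_ranking G L' (pE + 1)).subset
        (by rw [hstep]; exact mem_cons_self))
    · -- Case B : v comes before u; analyse v's choice in the original order
      have hPr := (phase1 r (by omega)).2
      have hrOr : r < Or'.length := by omega
      have hgV : Or'[r]'hrOr = v := hgetself r hrE hrOr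
      have huOr : u ∈ Or' := by rw [← horder]; exact huord
      have hfsome : ∃ w, Or'.find? (qB G v (AP G E r)) = some w := by
        have hiss : (Or'.find? (qB G v (AP G E r))).isSome := by
          apply find?_isSome.2
          exact ⟨u, huOr, by simp [qB, hadj', F1 r]⟩
        exact Option.isSome_iff_exists.1 hiss
      obtain ⟨w0, hw0⟩ := hfsome
      have hstepv : AP G Or' (r + 1) = (v, w0) :: AP G E r := by
        rw [AP_succ G hrOr, hgV, hPr, step_some G (Fv r) hw0]
      have hmemv : (v, w0) ∈ rankingList G Or' :=
        (AP_suffix_ranking G Or' (r + 1)).subset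
          (by rw [hstepv]; exact mem_cons_self)
      have hw0u : w0 = u := by
        rcases hmatch with hP | hP
        · have he := hdisjO (v, w0) hmemv (u, v) hP (by simp)
          exact absurd (by simpa using congrArg Prod.fst he) huv.symm
        · have he := hdisjO (v, w0) hmemv (v, u) hP (by simp)
          simpa using congrArg Prod.snd he
      rw [hw0u] at hw0
      -- the blocking property H
      have hEdrop : ∀ j, j ≤ pE → E.drop j = (E.drop j).take (pE - j) ++ u :: E.drop (pE + 1) := by
        intro j hj
        conv_lhs => rw [← take_append_drop (pE - j) (E.drop j)]
        rw [drop_drop, Nat.add_sub_cancel' hj, drop_eq_getElem_cons hpE, hgetpE]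
      have htakesplit : ∀ j, j ≤ pE → E.take pE = E.take j ++ (E.drop j).take (pE - j) := by
        intro j hj
        rw [← take_add, Nat.add_sub_cancel' hj]
      have hdecr : Or' = (E.take r ++ v :: (E.drop r).take (pE - r)) ++ u :: E.drop (pE + 1) := by
        rw [hOrdef]
        conv_lhs => rw [hEdrop r hrpE]
        simp
      have hndOr : Or'.Nodup := horder ▸ hnd
      have H : ∀ x ∈ E.take pE, qB G v (AP G E r) x = false := by
        intro x hx
        have hx' : x ∈ E.take r ++ v :: (E.drop r).take (pE - r) := by
          rw [htakesplit r hrpE] at hx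
          rcases mem_append.1 hx with h' | h'
          · exact mem_append_left _ h'
          · exact mem_append_right _ (mem_cons_of_mem _ h')
        exact find?_nodup_prefix (hdecr ▸ hndOr) (hdecr ▸ hw0) x hx'
      -- Phase 2 : runs on L' and E coincide from r up to min pE i
      have phase2 : ∀ s, r ≤ s → s ≤ min pE i → AP G L' s = AP G E s := by
        intro s hs1
        induction s, hs1 using Nat.le_induction with
        | base => intro _; exact (phase1 r (by omega)).1
        | succ n hrn ih =>
          intro hbound
          have heq := ih (by omega)
          have hnpE : n < pE := by omega
          have hni : n < i := by omega
          have hnE : n < E.length := by omega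
          have hnL' : n < L'.length := by omega
          have hgL : L'[n]'hnL' = E[n]'hnE := hgetlt i n hiE hni hnL' hnE
          set x := E[n]'hnE with hxdef
          cases hm : isMatchedL (AP G E n) x with
          | true =>
            have e1 : AP G L' (n + 1) = AP G E n := by
              rw [AP_succ G hnL', hgL, heq, step_matched G hm]
            have e2 : AP G E (n + 1) = AP G E n := by
              rw [AP_succ G hnE, step_matched G hm]
            exact e1.trans e2.symm
          | false =>
            have hcv : L'.find? (qB G x (AP G E n)) ≠ some v := by
              intro hfv
              have hqx := List.find?_some hfv
              have hadjxv : G.Adj x v := by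
                simp [qB] at hqx
                exact hqx.1
              have hxtake : x ∈ E.take pE := by
                have hnlt : n < (E.take pE).length := by rw [htklen pE (by omega)]; omega
                have hh : (E.take pE)[n]'hnlt = E[n]'hnE := getElem_take
                rw [hxdef, ← hh]
                exact getElem_mem hnlt
              have hqf := H x hxtake
              have hadj2 : G.Adj v x := hadjxv.symm
              simp [qB, hadj2] at hqf
              have hmt := matched_mono (AP_suffix G E (show r ≤ n from hrn)) hqf
              rw [hm] at hmt
              simp at hmt
            obtain ⟨_, hkE⟩ := find_ins E v (le_refl i) hiE hcv
            cases hc : L'.find? (qB G x (AP G E n)) with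
            | none =>
              rw [hc] at hkE
              have e1 : AP G L' (n + 1) = AP G E n := by
                rw [AP_succ G hnL', hgL, heq, step_none G hm hc]
              have e2 : AP G E (n + 1) = AP G E n := by
                rw [AP_succ G hnE, step_none G hm hkE]
              exact e1.trans e2.symm
            | some w =>
              rw [hc] at hkE
              have e1 : AP G L' (n + 1) = (x, w) :: AP G E n := by
                rw [AP_succ G hnL', hgL, heq, step_some G hm hc]
              have e2 : AP G E (n + 1) = (x, w) :: AP G E n := by
                rw [AP_succ G hnE, step_some G hm hkE]
              exact e1.trans e2.symm
      rcases lt_or_ge pE i with hpEi | hipE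
      · -- Case B1 : u is processed before position i; u picks v
        have h1 := phase2 pE hrpE (by omega)
        have hpEL' : pE < L'.length := by omega
        have hgU : L'[pE]'hpEL' = u := (hgetlt i pE hiE hpEi hpEL' hpE).trans hgetpE
        have hfindv : L'.find? (qB G u (AP G E pE)) = some v := by
          show (E.take i ++ v :: E.drop i).find? (qB G u (AP G E pE)) = some v
          apply find?_pre
          · intro x hx
            have hxE : x ∈ E := take_subset _ _ hx
            have hq := find?_eq_none.1 F2 x hxE
            simpa using hq
          · simp [qB, hadj, Fv pE]
        have hstep : AP G L' (pE + 1) = (u, v) :: AP G E pE := by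
          rw [AP_succ G hpEL', hgU, h1, step_some G (F1 pE) hfindv]
        exact Or.inl ((AP_suffix_ranking G L' (pE + 1)).subset
          (by rw [hstep]; exact mem_cons_self))
      · -- Case B2 : v is processed at position i and picks u
        have h1 := phase2 i hriI (by omega)
        have hiL' : i < L'.length := by omega
        have hgVi : L'[i]'hiL' = v := hgetself i hiE hiL'
        have hdec2 : L' = (E.take i ++ v :: (E.drop i).take (pE - i)) ++ u :: E.drop (pE + 1) := by
          show E.take i ++ v :: E.drop i = _
          conv_lhs => rw [hEdrop i hipE]
          simp
        have hfindu2 : L'.find? (qB G v (AP G E i)) = some u := by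
          rw [hdec2]
          apply find?_pre
          · intro x hx
            rcases mem_append.1 hx with h' | h'
            · have hxp : x ∈ E.take pE := by
                rw [htakesplit i hipE]
                exact mem_append_left _ h'
              exact qB_false_mono G (AP_suffix G E (show r ≤ i from hriI)) (H x hxp)
            · rcases mem_cons.1 h' with h'' | h''
              · subst h''
                simp [qB]
              · have hxp : x ∈ E.take pE := by
                  rw [htakesplit i hipE]
                  exact mem_append_right _ h''
                exact qB_false_mono G (AP_suffix G E (show r ≤ i from hriI)) (H x hxp)
          · simp [qB, hadj', F1 i]
        have hstep2 : AP G L' (i + 1) = (v, u) :: AP G E i := by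
          rw [AP_succ G hiL', hgVi, h1, step_some G (Fv i) hfindu2]
        exact Or.inr ((AP_suffix_ranking G L' (i + 1)).subset
          (by rw [hstep2]; exact mem_cons_self))
  constructor
  · rw [hins]
    exact key
  · rw [hins, hL'erase]
    exact hnb
end
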